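/- (Rowbottom's theorem, without AC) If μ is a normal κ-complete nonprincipal ultrafilter on κ and h : [A]^{<ω} → 2 is a partition of the finite subsets of a set A ∈ μ, then there exists C ⊆ A with C ∈ μ such that for every n < ω, h is constant on [C]^n. -/

import Mathlib

open Set

/-- `μ` is an ultrafilter on the ordinal `κ` (subsets of `κ` identified with
subsets of `Set.Iio κ`). -/
def UltraOn (κ : Ordinal) (μ : Set (Set Ordinal)) : Prop :=
  (∀ A ∈ μ, A ⊆ Set.Iio κ) ∧ Set.Iio κ ∈ μ ∧ (∅ : Set Ordinal) ∉ μ ∧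
  (∀ A ∈ μ, ∀ B : Set Ordinal, A ⊆ B → B ⊆ Set.Iio κ → B ∈ μ) ∧
  (∀ A ∈ μ, ∀ B ∈ μ, A ∩ B ∈ μ) ∧
  (∀ A : Set Ordinal, A ⊆ Set.Iio κ → A ∈ μ ∨ Set.Iio κ \ A ∈ μ)

/-- `μ` is `κ`-complete: intersections of fewer than `κ` many members of `μ`
belong to `μ`. -/
def CompleteOn (κ : Ordinal) (μ : Set (Set Ordinal)) : Prop :=
  ∀ γ < κ, ∀ A : Ordinal → Set Ordinal, (∀ α < γ, A α ∈ μ) →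
    (Set.Iio κ ∩ ⋂ α < γ, A α) ∈ μ

/-- `μ` is nonprincipal: no singleton belongs to `μ`. -/
def NonPrincipalOn (μ : Set (Set Ordinal)) : Prop := ∀ α : Ordinal, {α} ∉ μ

/-- `μ` is normal: closed under diagonal intersections. -/
def NormalOn (κ : Ordinal) (μ : Set (Set Ordinal)) : Prop :=
  ∀ A : Ordinal → Set Ordinal, (∀ α < κ, A α ∈ μ) →
    {β | β < κ ∧ ∀ α < β, β ∈ A α} ∈ μ

/-- A Prikry condition `(s, A)`: `s ∈ [κ]^{<ω}`, `A ∈ μ`, `max s < min A`. -/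
structure PrikryCond (κ : Ordinal) (μ : Set (Set Ordinal)) where
  stem : Finset Ordinal
  meas : Set Ordinal
  stem_lt : ∀ x ∈ stem, x < κ
  meas_mem : meas ∈ μ
  stem_lt_meas : ∀ x ∈ stem, ∀ y ∈ meas, x < y

/-- `p` extends `q`: `s_p ⊇ s_q`, `A_p ⊆ A_q`, and `s_p \ s_q ⊆ A_q`. -/
def PrikryLE {κ : Ordinal} {μ : Set (Set Ordinal)} (p q : PrikryCond κ μ) : Prop :=
  q.stem ⊆ p.stem ∧ p.meas ⊆ q.meas ∧ ∀ x ∈ p.stem, x ∉ q.stem → x ∈ q.meas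

section Aux

variable {κ : Ordinal} {μ : Set (Set Ordinal)}

lemma nonempty_of_mem (hu : UltraOn κ μ) {S : Set Ordinal} (hS : S ∈ μ) : S.Nonempty := by
  rw [Set.nonempty_iff_ne_empty]
  rintro rfl
  exact hu.2.2.1 hS

lemma cosingleton_mem (hu : UltraOn κ μ) (hnp : NonPrincipalOn μ) {ξ : Ordinal}
    (hξ : ξ < κ) : Iio κ \ {ξ} ∈ μ := by
  rcases hu.2.2.2.2.2 {ξ} (by simpa using hξ) with h | h
  · exact absurd h (hnp ξ)
  · exact h

lemma cobdd_mem (hu : UltraOn κ μ) (hc : CompleteOn κ μ) (hnp : NonPrincipalOn μ)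
    {α : Ordinal} (hα : α < κ) : Iio κ \ Iio α ∈ μ := by
  have key := hc α hα (fun ξ => Iio κ \ {ξ})
    (fun ξ hξ => cosingleton_mem hu hnp (hξ.trans hα))
  have : (Set.Iio κ ∩ ⋂ ξ < α, Iio κ \ {ξ}) = Iio κ \ Iio α := by
    ext β
    simp only [mem_inter_iff, mem_iInter, mem_diff, mem_Iio, mem_singleton_iff]
    constructor
    · rintro ⟨h1, h2⟩
      exact ⟨h1, fun hβ => (h2 β hβ).2 rfl⟩
    · rintro ⟨h1, h2⟩
      exact ⟨h1, fun ξ hξ => ⟨h1, fun he => h2 (he ▸ hξ)⟩⟩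
  rwa [this] at key

lemma succ_lt (hu : UltraOn κ μ) (hc : CompleteOn κ μ) (hnp : NonPrincipalOn μ)
    {α : Ordinal} (hα : α < κ) : α + 1 < κ := by
  have h1 : (Iio κ \ Iio α) ∩ (Iio κ \ {α}) ∈ μ :=
    hu.2.2.2.2.1 _ (cobdd_mem hu hc hnp hα) _ (cosingleton_mem hu hnp hα)
  obtain ⟨β, hβ⟩ := nonempty_of_mem hu h1
  simp only [mem_inter_iff, mem_diff, mem_Iio, mem_singleton_iff] at hβ
  have hαβ : α < β := lt_of_le_of_ne (not_lt.mp hβ.1.2) (fun he => hβ.2.2 he.symm)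
  calc α + 1 ≤ β := by
        rw [Ordinal.add_one_eq_succ]; exact Order.succ_le_of_lt hαβ
    _ < κ := hβ.1.1

lemma omega_lt (hu : UltraOn κ μ) (hc : CompleteOn κ μ) (hnp : NonPrincipalOn μ)
    (hnorm : NormalOn κ μ) : Ordinal.omega0 < κ := by
  have hκ0 : 0 < κ := by
    obtain ⟨β, hβ⟩ := nonempty_of_mem hu hu.2.1
    exact (zero_le (a := β)).trans_lt hβ
  have hD : {β | β < κ ∧ ∀ α < β, β ∈ Iio κ \ Iio (α + 1 + 1)} ∈ μ :=
    hnorm _ (fun α hα => cobdd_mem hu hc hnp (succ_lt hu hc hnp (succ_lt hu hc hnp hα)))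
  have hmem : ({β | β < κ ∧ ∀ α < β, β ∈ Iio κ \ Iio (α + 1 + 1)} ∩ (Iio κ \ {0})) ∈ μ :=
    hu.2.2.2.2.1 _ hD _ (cosingleton_mem hu hnp hκ0)
  obtain ⟨β, hβ⟩ := nonempty_of_mem hu hmem
  simp only [mem_inter_iff, mem_setOf_eq, mem_diff, mem_Iio, mem_singleton_iff] at hβ
  have hlim : Order.IsSuccLimit β := by
    refine Ordinal.isSuccLimit_iff.mpr ⟨hβ.2.2, Order.isSuccPrelimit_of_succ_lt fun α hα => ?_⟩
    have := (hβ.1.2 α hα).2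
    rw [not_lt] at this
    calc Order.succ α = α + 1 := (Ordinal.add_one_eq_succ α).symm
      _ < α + 1 + 1 := lt_add_one _
      _ ≤ β := this
  exact (Ordinal.omega0_le_of_isSuccLimit hlim).trans_lt hβ.1.1

lemma homog (hu : UltraOn κ μ) (hc : CompleteOn κ μ) (hnp : NonPrincipalOn μ)
    (hnorm : NormalOn κ μ) :
    ∀ n : ℕ, ∀ f : Finset Ordinal → Fin 2, ∃ H, H ∈ μ ∧
      ∀ s t : Finset Ordinal, ↑s ⊆ H → ↑t ⊆ H → s.card = n → t.card = n → f s = f t := by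
  intro n
  induction n with
  | zero =>
    intro f
    refine ⟨Iio κ, hu.2.1, fun s t _ _ hs ht => ?_⟩
    rw [Finset.card_eq_zero.mp hs, Finset.card_eq_zero.mp ht]
  | succ n ih =>
    intro f
    choose H hHμ hHhom using fun α : Ordinal => ih (fun s => f (insert α s))
    set X : Fin 2 → Set Ordinal := fun i =>
      {α | α < κ ∧ ∀ s : Finset Ordinal, ↑s ⊆ H α → s.card = n → f (insert α s) = i}
      with hXdef
    have hcover : ∀ α < κ, α ∈ X 0 ∨ α ∈ X 1 := by
      intro α hα
      by_cases h0 : ∀ s : Finset Ordinal, ↑s ⊆ H α → s.card = n → f (insert α s) = 0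
      · exact Or.inl ⟨hα, h0⟩
      · push_neg at h0
        obtain ⟨s, hs1, hs2, hs3⟩ := h0
        refine Or.inr ⟨hα, fun t ht1 ht2 => ?_⟩
        have : f (insert α t) = f (insert α s) := hHhom α t s ht1 hs1 ht2 hs2
        rw [this]
        omega
    obtain ⟨i, hXi⟩ : ∃ i, X i ∈ μ := by
      rcases hu.2.2.2.2.2 (X 0) (fun α hα => hα.1) with h | h
      · exact ⟨0, h⟩
      · refine ⟨1, hu.2.2.2.1 _ h _ (fun α hα => ?_) (fun α hα => hα.1)⟩
        rcases hcover α hα.1 with h' | h'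
        · exact absurd h' hα.2
        · exact h'
    have hdiag : {β | β < κ ∧ ∀ α < β, β ∈ H α} ∈ μ := hnorm H (fun α _ => hHμ α)
    set D : Set Ordinal := X i ∩ {β | β < κ ∧ ∀ α < β, β ∈ H α} with hDdef
    have hDμ : D ∈ μ := hu.2.2.2.2.1 _ hXi _ hdiag
    have key : ∀ s : Finset Ordinal, ↑s ⊆ D → s.card = n + 1 → f s = i := by
      intro s hsD hscard
      have hne : s.Nonempty := Finset.card_pos.mp (by omega)
      set α := s.min' hne with hαdef
      have hαs : α ∈ s := s.min'_mem hne
      set t := s.erase α with htdef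
      have htcard : t.card = n := by
        rw [htdef, Finset.card_erase_of_mem hαs, hscard]; omega
      have htH : ↑t ⊆ H α := by
        intro β hβ
        simp only [htdef, Finset.coe_erase, mem_diff, Finset.mem_coe,
          mem_singleton_iff] at hβ
        have hβD := hsD (Finset.mem_coe.mpr hβ.1)
        exact hβD.2.2 α (lt_of_le_of_ne (s.min'_le β hβ.1) (Ne.symm hβ.2))
      have hαX : α ∈ X i := (hsD (Finset.mem_coe.mpr hαs)).1
      have : f (insert α t) = i := hαX.2 t htH htcard
      rwa [htdef, Finset.insert_erase hαs] at this
    exact ⟨D, hDμ, fun s t hs ht hsc htc => by rw [key s hs hsc, key t ht htc]⟩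

end Aux


/-- Rowbottom's theorem, without AC: given a normal `κ`-complete
nonprincipal ultrafilter `μ`, `A ∈ μ` and a partition `h : [A]^{<ω} → 2`,
there is `C ⊆ A` in `μ` such that `h` is constant on `[C]^n` for each `n`. -/
theorem rowbottom (κ : Ordinal) (μ : Set (Set Ordinal))
    (hu : UltraOn κ μ) (hc : CompleteOn κ μ) (hnp : NonPrincipalOn μ)
    (hnorm : NormalOn κ μ) (A : Set Ordinal) (hA : A ∈ μ)
    (h : Finset Ordinal → Fin 2) :
    ∃ C : Set Ordinal, C ⊆ A ∧ C ∈ μ ∧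
      ∀ n : ℕ, ∀ s t : Finset Ordinal, ↑s ⊆ C → ↑t ⊆ C →
        s.card = n → t.card = n → h s = h t := by
  choose H hHμ hHhom using fun n : ℕ => homog hu hc hnp hnorm n h
  set A' : Ordinal → Set Ordinal :=
    fun o => ⋂ n : ℕ, ⋂ (_ : (n : Ordinal) = o), H n with hA'def
  have hA'eq : ∀ n : ℕ, A' ((n : ℕ) : Ordinal) = H n := by
    intro n
    ext x
    simp only [hA'def, mem_iInter]
    constructor
    · intro hx; exact hx n rfl
    · intro hx m hm
      rwa [Nat.cast_injective hm]
  have hA'μ : ∀ o < Ordinal.omega0, A' o ∈ μ := by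
    intro o ho
    obtain ⟨n, rfl⟩ := Ordinal.lt_omega0.mp ho
    rw [hA'eq]; exact hHμ n
  have hW : (Set.Iio κ ∩ ⋂ o < Ordinal.omega0, A' o) ∈ μ :=
    hc Ordinal.omega0 (omega_lt hu hc hnp hnorm) A' hA'μ
  refine ⟨A ∩ (Set.Iio κ ∩ ⋂ o < Ordinal.omega0, A' o),
    inter_subset_left, hu.2.2.2.2.1 _ hA _ hW, ?_⟩
  have hCH : ∀ n : ℕ, A ∩ (Set.Iio κ ∩ ⋂ o < Ordinal.omega0, A' o) ⊆ H n := by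
    intro n x hx
    have := hx.2.2
    rw [mem_iInter₂] at this
    have hxn := this ((n : ℕ) : Ordinal) (Ordinal.nat_lt_omega0 n)
    rwa [hA'eq] at hxn
  intro n s t hs ht hsc htc
  exact hHhom n s t (hs.trans (hCH n)) (ht.trans (hCH n)) hsc htc
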